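/- For the four-agent generalized matching problem G of Gale and Shapley defined below, the core of G is empty: every outcome of G admits a blocking coalition. -/
import Mathlib


/-- An outcome for a contract choice problem with agent set `α` and feasible pay-off
sets `F S ⊆ ℝ^S` is a pair `(f, v)` where `f` is a partition of the agent set and
`v : α → ℝ` is a nonnegative pay-off function whose restriction to each cell `S ∈ f`
belongs to `F S`. -/
def IsOutcome {α : Type*} [Fintype α]
    (F : (S : Finset α) → Set ({a : α // a ∈ S} → ℝ))
    (f : Finset (Finset α)) (v : α → ℝ) : Prop :=
  (∀ S ∈ f, S.Nonempty) ∧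
  (∀ S ∈ f, ∀ T ∈ f, S ≠ T → Disjoint S T) ∧
  (∀ a : α, ∃ S ∈ f, a ∈ S) ∧
  (∀ a : α, 0 ≤ v a) ∧
  (∀ S ∈ f, (fun a : {a : α // a ∈ S} => v a.1) ∈ F S)

/-- A coalition `S` blocks the pay-off function `v` if `S` is nonempty and there is
`x ∈ F S` with `x a > v a` for all `a ∈ S`. -/
def Blocks {α : Type*}
    (F : (S : Finset α) → Set ({a : α // a ∈ S} → ℝ))
    (S : Finset α) (v : α → ℝ) : Prop :=
  S.Nonempty ∧ ∃ x ∈ F S, ∀ a : {a : α // a ∈ S}, v a.1 < x a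

/-- `C⁰(S)`: permutations `μ` of the agent set with `μ(S) = S` such that `μ(T) ≠ T`
for every nonempty proper subset `T` of `S`. -/
def C0 {α : Type*} [DecidableEq α] [Fintype α] (S : Finset α) :
    Set (Equiv.Perm α) :=
  {μ | Finset.image (⇑μ) S = S ∧
    ∀ T : Finset α, T.Nonempty → T ⊂ S → Finset.image (⇑μ) T ≠ T}

/-- The utilities of the four-agent Gale–Shapley example (agents `0,1,2,3` stand for
agents `1,2,3,4` of the paper): `u a b` is the monetary worth to agent `a` of the
object of agent `b`. -/
def u : Fin 4 → Fin 4 → ℝ :=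
  ![![0, 3, 2, 1], ![2, 0, 3, 1], ![3, 2, 0, 1], ![3, 2, 1, 0]]

/-- The feasible pay-off sets of the Gale–Shapley example: for coalitions of size 1 or 2,
the pay-offs induced by reallocations `μ ∈ C⁰(S)`; otherwise the single vector `-e^S`. -/
def Fgs (S : Finset (Fin 4)) : Set ({a : Fin 4 // a ∈ S} → ℝ) :=
  if S.card = 1 ∨ S.card = 2 then
    {x | ∃ μ ∈ C0 S, ∀ a : {a : Fin 4 // a ∈ S}, x a = u a.1 (μ a.1)}
  else
    {fun _ => -1}

/-- In any outcome, each agent either gets pay-off `0` (if alone) or is matched with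
some other agent `b`, getting `u a b` while `b` gets `u b a`. -/
lemma payoff_cases {f : Finset (Finset (Fin 4))} {v : Fin 4 → ℝ}
    (h : IsOutcome Fgs f v) (a : Fin 4) :
    v a = 0 ∨ ∃ b : Fin 4, b ≠ a ∧ v a = u a b ∧ v b = u b a := by
  obtain ⟨hne, hdisj, hcov, hnn, hF⟩ := h
  obtain ⟨S, hSf, haS⟩ := hcov a
  have hx := hF S hSf
  by_cases hc : S.card = 1 ∨ S.card = 2
  · rw [Fgs, if_pos hc] at hx
    obtain ⟨μ, hμ, hμx⟩ := hx
    rcases hc with hc | hc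
    · left
      obtain ⟨c, hcS⟩ := Finset.card_eq_one.mp hc
      subst hcS
      have hac : a = c := Finset.mem_singleton.mp haS
      subst hac
      have hμa : μ a = a := by
        have hmem : μ a ∈ Finset.image (⇑μ) ({a} : Finset (Fin 4)) :=
          Finset.mem_image_of_mem _ (Finset.mem_singleton_self a)
        rw [hμ.1] at hmem
        exact Finset.mem_singleton.mp hmem
      have hv := hμx ⟨a, Finset.mem_singleton_self a⟩
      simp only at hv
      rw [hv, hμa]
      fin_cases a <;> rfl
    · right
      obtain ⟨c, d, hcd, hS⟩ := Finset.card_eq_two.mp hc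
      subst hS
      have hmem2 : ∀ x ∈ ({c, d} : Finset (Fin 4)), μ x ∈ ({c, d} : Finset (Fin 4)) := by
        intro x hx'
        rw [← hμ.1]
        exact Finset.mem_image_of_mem _ hx'
      have hfix : ∀ x ∈ ({c, d} : Finset (Fin 4)), μ x ≠ x := by
        intro x hx' hxx
        refine hμ.2 {x} ⟨x, Finset.mem_singleton_self x⟩ ?_ ?_
        · refine Finset.ssubset_iff_subset_ne.mpr ⟨Finset.singleton_subset_iff.mpr hx', ?_⟩
          intro hEq
          have := congrArg Finset.card hEq
          simp [Finset.card_pair hcd] at this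
        · rw [Finset.image_singleton, hxx]
      have hμc : μ c = d := by
        rcases Finset.mem_insert.mp (hmem2 c (by simp)) with h | h
        · exact absurd h (hfix c (by simp))
        · exact Finset.mem_singleton.mp h
      have hμd : μ d = c := by
        rcases Finset.mem_insert.mp (hmem2 d (by simp)) with h | h
        · exact h
        · exact absurd (Finset.mem_singleton.mp h) (hfix d (by simp))
      have hvc := hμx ⟨c, by simp⟩
      have hvd := hμx ⟨d, by simp⟩
      simp only at hvc hvd
      rw [hμc] at hvc
      rw [hμd] at hvd
      rcases Finset.mem_insert.mp haS with h | h
      · subst h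
        exact ⟨d, fun hh => hcd hh.symm, hvc, hvd⟩
      · have had := Finset.mem_singleton.mp h
        subst had
        exact ⟨c, fun hh => hcd hh, hvd, hvc⟩
  · exfalso
    rw [Fgs, if_neg hc, Set.mem_singleton_iff] at hx
    have hva : v a = -1 := congrFun hx ⟨a, haS⟩
    linarith [hnn a]

/-- If two distinct agents each prefer swapping with each other to their current
pay-offs, the pair blocks. -/
lemma blocks_pair (a b : Fin 4) (hab : a ≠ b) (hC : Equiv.swap a b ∈ C0 {a, b})
    (v : Fin 4 → ℝ) (ha : v a < u a b) (hb : v b < u b a) :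
    Blocks Fgs {a, b} v := by
  refine ⟨⟨a, Finset.mem_insert_self a _⟩,
    (fun p => u p.1 (Equiv.swap a b p.1)), ?_, ?_⟩
  · rw [Fgs, if_pos (Or.inr (Finset.card_pair hab))]
    exact ⟨Equiv.swap a b, hC, fun p => rfl⟩
  · rintro ⟨p, hp⟩
    rcases Finset.mem_insert.mp hp with h | h
    · subst h; simpa [Equiv.swap_apply_left] using ha
    · have := Finset.mem_singleton.mp h; subst this
      simpa [Equiv.swap_apply_right] using hb

lemma C01 : Equiv.swap (0:Fin 4) 1 ∈ C0 {0, 1} := by constructor <;> decide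
lemma C02 : Equiv.swap (0:Fin 4) 2 ∈ C0 {0, 2} := by constructor <;> decide
lemma C12 : Equiv.swap (1:Fin 4) 2 ∈ C0 {1, 2} := by constructor <;> decide

lemma blocks01 (v : Fin 4 → ℝ) (h0 : v 0 < 3) (h1 : v 1 < 2) : Blocks Fgs {0, 1} v := by
  refine blocks_pair 0 1 (by decide) C01 v ?_ ?_ <;> [show v 0 < u 0 1; show v 1 < u 1 0] <;>
    simp only [show u 0 1 = 3 from rfl, show u 1 0 = 2 from rfl] <;> assumption
lemma blocks02 (v : Fin 4 → ℝ) (h0 : v 0 < 2) (h2 : v 2 < 3) : Blocks Fgs {0, 2} v := by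
  refine blocks_pair 0 2 (by decide) C02 v ?_ ?_ <;> [show v 0 < u 0 2; show v 2 < u 2 0] <;>
    simp only [show u 0 2 = 2 from rfl, show u 2 0 = 3 from rfl] <;> assumption
lemma blocks12 (v : Fin 4 → ℝ) (h1 : v 1 < 3) (h2 : v 2 < 2) : Blocks Fgs {1, 2} v := by
  refine blocks_pair 1 2 (by decide) C12 v ?_ ?_ <;> [show v 1 < u 1 2; show v 2 < u 2 1] <;>
    simp only [show u 1 2 = 3 from rfl, show u 2 1 = 2 from rfl] <;> assumption

/-- Numeric version of `payoff_cases` for agent `0`. -/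
lemma pc0 {f : Finset (Finset (Fin 4))} {v : Fin 4 → ℝ} (h : IsOutcome Fgs f v) :
    v 0 = 0 ∨ (v 0 = 3 ∧ v 1 = 2) ∨ (v 0 = 2 ∧ v 2 = 3) ∨ (v 0 = 1 ∧ v 3 = 3) := by
  rcases payoff_cases h 0 with h' | ⟨b, hb, h1, h2⟩
  · exact Or.inl h'
  · fin_cases b
    · exact absurd rfl hb
    · exact Or.inr (Or.inl ⟨h1, h2⟩)
    · exact Or.inr (Or.inr (Or.inl ⟨h1, h2⟩))
    · exact Or.inr (Or.inr (Or.inr ⟨h1, h2⟩))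

/-- Numeric version of `payoff_cases` for agent `1`. -/
lemma pc1 {f : Finset (Finset (Fin 4))} {v : Fin 4 → ℝ} (h : IsOutcome Fgs f v) :
    v 1 = 0 ∨ (v 1 = 2 ∧ v 0 = 3) ∨ (v 1 = 3 ∧ v 2 = 2) ∨ (v 1 = 1 ∧ v 3 = 2) := by
  rcases payoff_cases h 1 with h' | ⟨b, hb, h1, h2⟩
  · exact Or.inl h'
  · fin_cases b
    · exact Or.inr (Or.inl ⟨h1, h2⟩)
    · exact absurd rfl hb
    · exact Or.inr (Or.inr (Or.inl ⟨h1, h2⟩))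
    · exact Or.inr (Or.inr (Or.inr ⟨h1, h2⟩))

/-- Numeric version of `payoff_cases` for agent `2`. -/
lemma pc2 {f : Finset (Finset (Fin 4))} {v : Fin 4 → ℝ} (h : IsOutcome Fgs f v) :
    v 2 = 0 ∨ (v 2 = 3 ∧ v 0 = 2) ∨ (v 2 = 2 ∧ v 1 = 3) ∨ (v 2 = 1 ∧ v 3 = 1) := by
  rcases payoff_cases h 2 with h' | ⟨b, hb, h1, h2⟩
  · exact Or.inl h'
  · fin_cases b
    · exact Or.inr (Or.inl ⟨h1, h2⟩)
    · exact Or.inr (Or.inr (Or.inl ⟨h1, h2⟩))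
    · exact absurd rfl hb
    · exact Or.inr (Or.inr (Or.inr ⟨h1, h2⟩))

/-- **Example 1 (Gale–Shapley).** The four-agent room-mates problem above has an empty
core: every outcome admits a blocking coalition. -/
theorem gale_shapley_core_empty :
    ∀ (f : Finset (Finset (Fin 4))) (v : Fin 4 → ℝ),
      IsOutcome Fgs f v → ∃ S : Finset (Fin 4), Blocks Fgs S v := by
  intro f v h
  have h0 := pc0 h
  have h1 := pc1 h
  have h2 := pc2 h
  rcases h0 with h0 | ⟨ha0, hb0⟩ | ⟨ha0, hb0⟩ | ⟨ha0, hb0⟩ <;>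
    rcases h1 with h1 | ⟨ha1, hb1⟩ | ⟨ha1, hb1⟩ | ⟨ha1, hb1⟩ <;>
    rcases h2 with h2 | ⟨ha2, hb2⟩ | ⟨ha2, hb2⟩ | ⟨ha2, hb2⟩ <;>
    first
    | exact ⟨{0, 1}, blocks01 v (by linarith) (by linarith)⟩
    | exact ⟨{0, 2}, blocks02 v (by linarith) (by linarith)⟩
    | exact ⟨{1, 2}, blocks12 v (by linarith) (by linarith)⟩
    | (exfalso; linarith)
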